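/- (Well-definedness of the logarithmic Schrödinger operator.) Let N ≥ 1 and let u ∈ L₀(ℝ^N) ∩ L^∞(ℝ^N) be Dini continuous at a point x ∈ ℝ^N. Then the principal value lim_{ε→0⁺} ∫_{{y : |x−y|>ε}} (u(x)−u(y)) κ(|x−y|) |x−y|^{−N} dy exists and is finite; in particular ((I−Δ)^log u)(x) is well defined. -/

import Mathlib

open MeasureTheory Filter Set

/-- The kernel `κ(r) = ∫₀^∞ t^{N/2−1} e^{−t − r²/(4t)} dt` of the logarithmic
Schrödinger operator on `ℝ^N`. -/
noncomputable def kappa (N : ℕ) (r : ℝ) : ℝ :=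
  ∫ t in Set.Ioi (0 : ℝ), t ^ ((N : ℝ) / 2 - 1) * Real.exp (-t - r ^ 2 / (4 * t))

/-- The logarithmic Schrödinger operator `(I − Δ)^log`, defined as the principal-value
singular integral
`π^{−N/2} lim_{ε→0⁺} ∫_{|x−y|>ε} (u(x)−u(y)) κ(|x−y|) |x−y|^{−N} dy`. -/
noncomputable def logSchrodingerOp (N : ℕ) (u : EuclideanSpace ℝ (Fin N) → ℝ)
    (x : EuclideanSpace ℝ (Fin N)) : ℝ :=
  Real.pi ^ (-(N : ℝ) / 2) *
    limUnder (nhdsWithin 0 (Set.Ioi (0 : ℝ))) fun ε : ℝ =>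
      ∫ y in {y : EuclideanSpace ℝ (Fin N) | ε < dist x y},
        (u x - u y) * kappa N (dist x y) / dist x y ^ N

/-- `u ∈ L₀(ℝ^N)`: `u` is locally integrable and
`∫ |u(x)| e^{−|x|} (1+|x|)^{−(N+1)/2} dx < ∞`. -/
def MemL0 {N : ℕ} (u : EuclideanSpace ℝ (Fin N) → ℝ) : Prop :=
  MeasureTheory.LocallyIntegrable u MeasureTheory.volume ∧
    MeasureTheory.Integrable
      (fun x => |u x| * Real.exp (-‖x‖) / (1 + ‖x‖) ^ (((N : ℝ) + 1) / 2))
      MeasureTheory.volume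

/-- The modulus of continuity `Ψ_{u,x}(r) = sup_{|y−x|≤r} |u(x)−u(y)|`. -/
noncomputable def modulusOfContinuity {N : ℕ} (u : EuclideanSpace ℝ (Fin N) → ℝ)
    (x : EuclideanSpace ℝ (Fin N)) (r : ℝ) : ℝ :=
  sSup {d : ℝ | ∃ y, dist x y ≤ r ∧ d = |u x - u y|}

/-- `u` is Dini continuous at `x`: `∫₀¹ Ψ_{u,x}(r)/r dr < ∞`. -/
def DiniContinuousAt {N : ℕ} (u : EuclideanSpace ℝ (Fin N) → ℝ)
    (x : EuclideanSpace ℝ (Fin N)) : Prop :=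
  MeasureTheory.IntegrableOn (fun r => modulusOfContinuity u x r / r) (Set.Ioc 0 1)

/-- The reflection `x^λ = (2λ−x₁, x₂, …, x_N)` across the hyperplane `{x₁ = λ}`. -/
noncomputable def reflect {N : ℕ} [NeZero N] (lam : ℝ)
    (x : EuclideanSpace ℝ (Fin N)) : EuclideanSpace ℝ (Fin N) :=
  WithLp.toLp 2 (Function.update x.ofLp 0 (2 * lam - x 0))

/-- The half space `Σ_λ = {x ∈ ℝ^N : x₁ < λ}`. -/
def halfSpace (N : ℕ) [NeZero N] (lam : ℝ) : Set (EuclideanSpace ℝ (Fin N)) :=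
  {x | x 0 < lam}

section Helpers2
open Metric
open scoped ENNReal

section Helpers

local notation "dim" => Module.finrank ℝ

variable {E : Type*} [NormedAddCommGroup E] [NormedSpace ℝ E] [MeasurableSpace E]
  [BorelSpace E] [FiniteDimensional ℝ E] [Nontrivial E]

theorem my_lintegral_fun_norm_addHaar (μ : Measure E) [μ.IsAddHaarMeasure]
    (f : ℝ → ℝ≥0∞) (hf : Measurable f) :
    ∫⁻ x, f ‖x‖ ∂μ = μ.toSphere univ *
      ∫⁻ r in Ioi (0:ℝ), ENNReal.ofReal (r ^ (dim E - 1)) * f r := by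
  have h3 : ∫⁻ x : Ioi (0:ℝ), f x ∂(Measure.volumeIoiPow (dim E - 1)) =
      ∫⁻ r in Ioi (0:ℝ), ENNReal.ofReal (r ^ (dim E - 1)) * f r := by
    rw [Measure.volumeIoiPow, lintegral_withDensity_eq_lintegral_mul _
        (show Measurable fun r : Ioi (0:ℝ) => ENNReal.ofReal (r.1 ^ (dim E - 1)) from
          (measurable_subtype_coe.pow_const _).ennreal_ofReal)
        (show Measurable fun x : Ioi (0:ℝ) => f ↑x from hf.comp measurable_subtype_coe)]
    exact lintegral_subtype_comap (μ := (volume : Measure ℝ)) measurableSet_Ioi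
      (fun r => ENNReal.ofReal (r ^ (dim E - 1)) * f r)
  calc
    ∫⁻ x, f ‖x‖ ∂μ = ∫⁻ x : ({(0:E)}ᶜ : Set E), f ‖x.1‖ ∂(μ.comap (↑)) := by
      rw [lintegral_subtype_comap (measurableSet_singleton _).compl fun x ↦ f (‖x‖),
        restrict_compl_singleton]
    _ = ∫⁻ x : sphere (0 : E) 1 × Ioi (0 : ℝ), f x.2
        ∂μ.toSphere.prod (.volumeIoiPow (dim E - 1)) :=
      by simpa only [Function.comp_apply, homeomorphUnitSphereProd_apply_snd_coe] using
          (μ.measurePreserving_homeomorphUnitSphereProd.lintegral_comp_emb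
            (Homeomorph.measurableEmbedding _) (f ∘ Subtype.val ∘ Prod.snd))
    _ = μ.toSphere univ * ∫⁻ x : Ioi (0:ℝ), f x ∂(Measure.volumeIoiPow (dim E - 1)) := by
      rw [lintegral_prod (fun p : sphere (0:E) 1 × Ioi (0:ℝ) => f p.2)
        ((hf.comp (measurable_subtype_coe.comp measurable_snd)).aemeasurable)]
      simp [lintegral_const, mul_comm]
    _ = _ := by rw [h3]

theorem my_integrable_radial (μ : Measure E) [μ.IsAddHaarMeasure]
    (f : ℝ → ℝ) (hf : Measurable f) (hnn : ∀ r, 0 ≤ f r)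
    (hfin : ∫⁻ r in Ioi (0:ℝ), ENNReal.ofReal (r ^ (dim E - 1) * f r) < ⊤) :
    Integrable (fun y : E => f ‖y‖) μ := by
  refine ⟨(hf.comp measurable_norm).aestronglyMeasurable, ?_⟩
  rw [hasFiniteIntegral_iff_ofReal (Eventually.of_forall fun y => hnn _)]
  rw [my_lintegral_fun_norm_addHaar μ (fun r => ENNReal.ofReal (f r)) hf.ennreal_ofReal]
  refine ENNReal.mul_lt_top (measure_lt_top _ _) ?_
  refine lt_of_le_of_lt (le_of_eq (setLIntegral_congr_fun measurableSet_Ioi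
    (fun r hr => ?_))) hfin
  rw [← ENNReal.ofReal_mul (pow_nonneg (le_of_lt hr) _)]

theorem my_lint_ofReal_lt_top {f : ℝ → ℝ} {s : Set ℝ} (h : IntegrableOn f s) :
    ∫⁻ r in s, ENNReal.ofReal (f r) < ⊤ :=
  lt_of_le_of_lt (lintegral_mono fun r => Real.ofReal_le_enorm _) h.2

theorem my_integrable_radial_dist (N : ℕ) [NeZero N]
    (x : EuclideanSpace ℝ (Fin N)) (f : ℝ → ℝ) (hf : Measurable f) (hnn : ∀ r, 0 ≤ f r)
    (hfin : ∫⁻ r in Ioi (0:ℝ), ENNReal.ofReal (r ^ (N - 1) * f r) < ⊤) :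
    Integrable (fun y : EuclideanSpace ℝ (Fin N) => f (dist x y)) volume := by
  have h1 : Integrable (fun y : EuclideanSpace ℝ (Fin N) => f ‖y‖) volume :=
    my_integrable_radial volume f hf hnn (by rw [finrank_euclideanSpace_fin]; exact hfin)
  have hmp : MeasurePreserving (fun y : EuclideanSpace ℝ (Fin N) => x - y) volume volume :=
    Measure.measurePreserving_sub_left volume x
  have h2 := (hmp.integrable_comp_emb (Homeomorph.subLeft x).measurableEmbedding
    (g := fun y : EuclideanSpace ℝ (Fin N) => f ‖y‖)).2 h1
  refine h2.congr (Eventually.of_forall fun y => ?_)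
  simp [Function.comp, dist_eq_norm]

end Helpers
end Helpers2

/-- well-definedness of the logarithmic Schrödinger operator at a
point of Dini continuity. -/
theorem logSchrodinger_well_defined (N : ℕ) [NeZero N]
    (u : EuclideanSpace ℝ (Fin N) → ℝ)
    (hL0 : MemL0 u) (hbdd : ∃ M : ℝ, ∀ x, |u x| ≤ M)
    (x : EuclideanSpace ℝ (Fin N)) (hdini : DiniContinuousAt u x) :
    (∀ ε > (0 : ℝ), MeasureTheory.IntegrableOn
        (fun y => (u x - u y) * kappa N (dist x y) / dist x y ^ N)
        {y | ε < dist x y}) ∧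
    ∃ L : ℝ, Filter.Tendsto
      (fun ε : ℝ => ∫ y in {y : EuclideanSpace ℝ (Fin N) | ε < dist x y},
        (u x - u y) * kappa N (dist x y) / dist x y ^ N)
      (nhdsWithin 0 (Set.Ioi 0)) (nhds L) := by
  obtain ⟨M, hM⟩ := hbdd
  have hM0 : 0 ≤ M := le_trans (abs_nonneg _) (hM x)
  have hN1 : 1 ≤ N := Nat.one_le_iff_ne_zero.2 (NeZero.ne N)
  have hNR : (1:ℝ) ≤ (N:ℝ) := by exact_mod_cast hN1
  set a : ℝ := (N:ℝ)/2 - 1 with ha_def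
  have ha : (-1:ℝ) < a := by rw [ha_def]; linarith
  -- modulus of continuity facts
  set Ψ : ℝ → ℝ := modulusOfContinuity u x with hΨdef
  have habs : ∀ y, |u x - u y| ≤ 2 * M := by
    intro y
    calc |u x - u y| = ‖u x - u y‖ := (Real.norm_eq_abs _).symm
      _ ≤ ‖u x‖ + ‖u y‖ := norm_sub_le _ _
      _ ≤ 2 * M := by
          have := hM x; have := hM y
          simp only [Real.norm_eq_abs]; linarith
  have hbddS : ∀ r : ℝ, BddAbove {d : ℝ | ∃ y, dist x y ≤ r ∧ d = |u x - u y|} := by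
    intro r
    exact ⟨2 * M, fun d hd => by obtain ⟨y, _, rfl⟩ := hd; exact habs y⟩
  have hmem : ∀ r : ℝ, 0 ≤ r → (0:ℝ) ∈ {d : ℝ | ∃ y, dist x y ≤ r ∧ d = |u x - u y|} := by
    intro r hr; exact ⟨x, by simpa using hr, by simp⟩
  have hΨnn : ∀ r : ℝ, 0 ≤ r → 0 ≤ Ψ r := fun r hr => le_csSup (hbddS r) (hmem r hr)
  have hΨle : ∀ y, ∀ r : ℝ, dist x y ≤ r → |u x - u y| ≤ Ψ r :=
    fun y r h => le_csSup (hbddS r) ⟨y, h, rfl⟩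
  have hΨmono : Monotone Ψ := by
    intro r1 r2 h12
    rcases le_or_gt 0 r1 with h | h
    · exact csSup_le_csSup (hbddS r2) ⟨0, hmem r1 h⟩
        (fun d hd => by obtain ⟨y, hy, rfl⟩ := hd; exact ⟨y, hy.trans h12, rfl⟩)
    · have hemp : {d : ℝ | ∃ y, dist x y ≤ r1 ∧ d = |u x - u y|} = ∅ := by
        ext d; simp only [Set.mem_setOf_eq, Set.mem_empty_iff_false, iff_false]
        rintro ⟨y, hy, -⟩; exact absurd (dist_nonneg.trans hy) (not_le.2 h)
      have h1 : Ψ r1 = 0 := by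
        rw [hΨdef, modulusOfContinuity, hemp, Real.sSup_empty]
      rcases le_or_gt 0 r2 with h2 | h2
      · rw [h1]; exact hΨnn r2 h2
      · have hemp2 : {d : ℝ | ∃ y, dist x y ≤ r2 ∧ d = |u x - u y|} = ∅ := by
          ext d; simp only [Set.mem_setOf_eq, Set.mem_empty_iff_false, iff_false]
          rintro ⟨y, hy, -⟩; exact absurd (dist_nonneg.trans hy) (not_le.2 h2)
        rw [h1, hΨdef, modulusOfContinuity, hemp2, Real.sSup_empty]
  have hΨmeas : Measurable Ψ := hΨmono.measurable
  -- kappa facts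
  have hGamma : IntegrableOn (fun t : ℝ => t ^ a * Real.exp (-t)) (Ioi 0) := by
    have := integrableOn_rpow_mul_exp_neg_mul_rpow ha (one_pos : (0:ℝ) < 1) one_pos
    simpa [Real.rpow_one] using this
  have hGammaHalf : IntegrableOn (fun t : ℝ => t ^ a * Real.exp (-(1/2) * t)) (Ioi 0) := by
    have := integrableOn_rpow_mul_exp_neg_mul_rpow ha (one_pos : (0:ℝ) < 1) (by norm_num : (0:ℝ) < 1/2)
    simpa [Real.rpow_one] using this
  have hker_int : ∀ r : ℝ,
      IntegrableOn (fun t : ℝ => t ^ a * Real.exp (-t - r^2/(4*t))) (Ioi 0) := by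
    intro r
    refine Integrable.mono' hGamma
      ((by fun_prop : Measurable fun t : ℝ =>
        t ^ a * Real.exp (-t - r^2/(4*t))).aestronglyMeasurable) ?_
    filter_upwards [ae_restrict_mem measurableSet_Ioi] with t ht
    have ht0 : (0:ℝ) < t := ht
    rw [Real.norm_eq_abs, abs_mul, abs_of_nonneg (Real.rpow_nonneg ht0.le a),
        abs_of_nonneg (Real.exp_nonneg _)]
    refine mul_le_mul_of_nonneg_left (Real.exp_le_exp.2 ?_) (Real.rpow_nonneg ht0.le a)
    have : 0 ≤ r^2/(4*t) := div_nonneg (sq_nonneg r) (by linarith)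
    linarith
  set K : ℝ := ∫ t in Ioi (0:ℝ), t ^ a * Real.exp (-t) with hK_def
  have hK0 : 0 ≤ K :=
    setIntegral_nonneg measurableSet_Ioi fun t ht =>
      mul_nonneg (Real.rpow_nonneg (le_of_lt ht) a) (Real.exp_nonneg _)
  set C : ℝ := ∫ t in Ioi (0:ℝ), t ^ a * Real.exp (-(1/2) * t) with hC_def
  have hC0 : 0 ≤ C :=
    setIntegral_nonneg measurableSet_Ioi fun t ht =>
      mul_nonneg (Real.rpow_nonneg (le_of_lt ht) a) (Real.exp_nonneg _)
  have hkappa_nonneg : ∀ r, 0 ≤ kappa N r := fun r =>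
    setIntegral_nonneg measurableSet_Ioi fun t ht =>
      mul_nonneg (Real.rpow_nonneg (le_of_lt ht) _) (Real.exp_nonneg _)
  have hkappa_le_K : ∀ r, kappa N r ≤ K := by
    intro r
    refine setIntegral_mono_on (hker_int r) hGamma measurableSet_Ioi fun t ht => ?_
    have ht0 : (0:ℝ) < t := ht
    refine mul_le_mul_of_nonneg_left (Real.exp_le_exp.2 ?_) (Real.rpow_nonneg ht0.le a)
    have : 0 ≤ r^2/(4*t) := div_nonneg (sq_nonneg r) (by linarith)
    linarith
  have hkappa_le_C : ∀ r : ℝ, 0 ≤ r → kappa N r ≤ C * Real.exp (-(r/2)) := by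
    intro r hr
    calc kappa N r ≤ ∫ t in Ioi (0:ℝ), (t ^ a * Real.exp (-(1/2) * t)) * Real.exp (-(r/2)) := by
          refine setIntegral_mono_on (hker_int r) (hGammaHalf.mul_const _)
            measurableSet_Ioi fun t ht => ?_
          have ht0 : (0:ℝ) < t := ht
          rw [mul_assoc, ← Real.exp_add]
          refine mul_le_mul_of_nonneg_left (Real.exp_le_exp.2 ?_) (Real.rpow_nonneg ht0.le a)
          have h4t : (0:ℝ) < 4 * t := by linarith
          have hdiv : r/2 - t/2 ≤ r^2/(4*t) := by
            rw [le_div_iff₀ h4t]; nlinarith [sq_nonneg (r - t), sq_nonneg t]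
          linarith
      _ = C * Real.exp (-(r/2)) := by rw [integral_mul_const]
  have hκm : Measurable (kappa N) := by
    have hFm : Measurable (fun p : ℝ × ℝ =>
        p.2 ^ ((N : ℝ) / 2 - 1) * Real.exp (-p.2 - p.1^2/(4*p.2))) := by
      fun_prop
    have hst := hFm.stronglyMeasurable.integral_prod_right' (ν := volume.restrict (Ioi (0:ℝ)))
    exact hst.measurable
  -- near-field dominating radial profile
  set Φ : ℝ → ℝ := fun r => if r ∈ Ioc (0:ℝ) 1 then Ψ r / r^N else 0 with hΦdef
  have hΦmeas : Measurable Φ :=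
    Measurable.ite measurableSet_Ioc (hΨmeas.div (measurable_id.pow_const N)) measurable_const
  have hΦnn : ∀ r, 0 ≤ Φ r := by
    intro r
    simp only [hΦdef]
    split_ifs with h
    · exact div_nonneg (hΨnn r h.1.le) (pow_nonneg h.1.le N)
    · exact le_refl 0
  have hΦfin : ∫⁻ r in Ioi (0:ℝ), ENNReal.ofReal (r ^ (N - 1) * Φ r) < ⊤ := by
    have hpt : ∀ r : ℝ, ENNReal.ofReal (r ^ (N - 1) * Φ r) ≤
        (Ioc (0:ℝ) 1).indicator (fun r => ENNReal.ofReal (Ψ r / r)) r := by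
      intro r
      by_cases h : r ∈ Ioc (0:ℝ) 1
      · rw [Set.indicator_of_mem h]
        simp only [hΦdef, if_pos h]
        apply ENNReal.ofReal_le_ofReal
        have hr0 : (0:ℝ) < r := h.1
        have hrN : r ^ N = r ^ (N-1) * r := by rw [← pow_succ, Nat.sub_add_cancel hN1]
        have hc : (r:ℝ)^(N-1) ≠ 0 := pow_ne_zero _ hr0.ne'
        rw [hrN]
        rw [div_mul_eq_div_div_swap, mul_div_assoc']
        rw [mul_comm, mul_div_assoc, div_self hc, mul_one]
      · simp only [hΦdef, if_neg h, mul_zero, ENNReal.ofReal_zero]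
        exact bot_le
    calc ∫⁻ r in Ioi (0:ℝ), ENNReal.ofReal (r ^ (N - 1) * Φ r)
        ≤ ∫⁻ r in Ioi (0:ℝ),
            (Ioc (0:ℝ) 1).indicator (fun r => ENNReal.ofReal (Ψ r / r)) r :=
          lintegral_mono fun r => hpt r
      _ ≤ ∫⁻ r, (Ioc (0:ℝ) 1).indicator (fun r => ENNReal.ofReal (Ψ r / r)) r :=
          setLIntegral_le_lintegral _ _
      _ = ∫⁻ r in Ioc (0:ℝ) 1, ENNReal.ofReal (Ψ r / r) :=
          lintegral_indicator measurableSet_Ioc _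
      _ < ⊤ := my_lint_ofReal_lt_top hdini
  -- far-field
  have hf₂fin : ∫⁻ r in Ioi (0:ℝ), ENNReal.ofReal (r ^ (N - 1) * Real.exp (-(r/2))) < ⊤ := by
    have hint : IntegrableOn
        (fun r : ℝ => r ^ (((N-1 : ℕ)):ℝ) * Real.exp (-(1/2) * r ^ (1:ℝ))) (Ioi 0) :=
      integrableOn_rpow_mul_exp_neg_mul_rpow
        (lt_of_lt_of_le neg_one_lt_zero (Nat.cast_nonneg _)) one_pos
        (by norm_num : (0:ℝ) < 1/2)
    have := my_lint_ofReal_lt_top hint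
    refine lt_of_le_of_lt (le_of_eq (setLIntegral_congr_fun measurableSet_Ioi
      (fun r hr => ?_))) this
    congr 1
    rw [Real.rpow_one, Real.rpow_natCast]
    ring_nf
  -- the two dominating integrable functions
  have hInt₁ : Integrable (fun y : EuclideanSpace ℝ (Fin N) => Φ (dist x y)) volume :=
    my_integrable_radial_dist N x Φ hΦmeas hΦnn hΦfin
  have hInt₂ : Integrable (fun y : EuclideanSpace ℝ (Fin N) => Real.exp (-(dist x y/2)))
      volume :=
    my_integrable_radial_dist N x (fun r => Real.exp (-(r/2)))
      (Real.measurable_exp.comp (measurable_id.div_const 2).neg)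
      (fun r => Real.exp_nonneg _) hf₂fin
  set D : EuclideanSpace ℝ (Fin N) → ℝ :=
    fun y => K * Φ (dist x y) + (2 * M * C) * Real.exp (-(dist x y/2)) with hD_def
  have hD : Integrable D volume := (hInt₁.const_mul K).add (hInt₂.const_mul _)
  -- the integrand
  set g : EuclideanSpace ℝ (Fin N) → ℝ :=
    fun y => (u x - u y) * kappa N (dist x y) / dist x y ^ N with hg_def
  have hdistm : Measurable fun y : EuclideanSpace ℝ (Fin N) => dist x y :=
    (continuous_const.dist continuous_id).measurable
  have hg_meas : AEStronglyMeasurable g volume := by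
    have h1 : Measurable fun y : EuclideanSpace ℝ (Fin N) =>
        kappa N (dist x y) * (dist x y ^ N)⁻¹ :=
      (hκm.comp hdistm).mul ((hdistm.pow_const N).inv)
    have h2 : AEStronglyMeasurable
        (fun y : EuclideanSpace ℝ (Fin N) =>
          (u x - u y) * (kappa N (dist x y) * (dist x y ^ N)⁻¹)) volume :=
      AEStronglyMeasurable.mul
        (f := fun y : EuclideanSpace ℝ (Fin N) => u x - u y)
        (g := fun y : EuclideanSpace ℝ (Fin N) => kappa N (dist x y) * (dist x y ^ N)⁻¹)
        (aestronglyMeasurable_const.sub hL0.1.aestronglyMeasurable) h1.aestronglyMeasurable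
    refine h2.congr (Filter.Eventually.of_forall fun y => ?_)
    simp only [hg_def]
    rw [div_eq_mul_inv, mul_assoc]
  have hae_ne : ∀ᵐ y : EuclideanSpace ℝ (Fin N) ∂volume, y ≠ x := by
    rw [ae_iff]
    have : {y : EuclideanSpace ℝ (Fin N) | ¬ y ≠ x} = {x} := by ext y; simp
    rw [this]
    exact measure_singleton x
  have hbound : ∀ᵐ y ∂(volume : Measure (EuclideanSpace ℝ (Fin N))), ‖g y‖ ≤ D y := by
    refine hae_ne.mono fun y hy => ?_
    have hr : 0 < dist x y := dist_pos.2 fun h => hy h.symm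
    have hrN : (0:ℝ) < dist x y ^ N := pow_pos hr N
    have hnorm : ‖g y‖ = |u x - u y| * kappa N (dist x y) / dist x y ^ N := by
      rw [hg_def, Real.norm_eq_abs, abs_div, abs_mul,
        abs_of_nonneg (hkappa_nonneg _), abs_of_pos hrN]
    rw [hnorm, hD_def]
    have hsecond : 0 ≤ (2 * M * C) * Real.exp (-(dist x y/2)) :=
      mul_nonneg (by positivity) (Real.exp_nonneg _)
    rcases le_or_gt (dist x y) 1 with hle | hlt
    · have h1 : |u x - u y| * kappa N (dist x y) ≤ Ψ (dist x y) * K :=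
        mul_le_mul (hΨle y _ le_rfl) (hkappa_le_K _) (hkappa_nonneg _) (hΨnn _ hr.le)
      have h2 : |u x - u y| * kappa N (dist x y) / dist x y ^ N ≤
          Ψ (dist x y) * K / dist x y ^ N := (div_le_div_iff_of_pos_right hrN).2 h1
      have h3 : Ψ (dist x y) * K / dist x y ^ N = K * Φ (dist x y) := by
        simp only [hΦdef, if_pos (Set.mem_Ioc.2 ⟨hr, hle⟩)]
        rw [mul_comm (Ψ (dist x y)) K, mul_div_assoc]
      linarith [h2.trans_eq h3]
    · have h2M : |u x - u y| ≤ 2 * M := habs y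
      have hκC : kappa N (dist x y) ≤ C * Real.exp (-(dist x y/2)) :=
        hkappa_le_C _ hr.le
      have h1 : |u x - u y| * kappa N (dist x y) ≤
          2 * M * (C * Real.exp (-(dist x y/2))) :=
        mul_le_mul h2M hκC (hkappa_nonneg _) (by linarith)
      have hge1 : (1:ℝ) ≤ dist x y ^ N := one_le_pow₀ hlt.le
      have h2 : |u x - u y| * kappa N (dist x y) / dist x y ^ N ≤
          |u x - u y| * kappa N (dist x y) :=
        div_le_self (mul_nonneg (abs_nonneg _) (hkappa_nonneg _)) hge1
      have hΦ0 : 0 ≤ K * Φ (dist x y) := mul_nonneg hK0 (hΦnn _)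
      have : 2 * M * (C * Real.exp (-(dist x y/2))) =
          (2 * M * C) * Real.exp (-(dist x y/2)) := by ring
      linarith [h2.trans (h1.trans_eq this)]
  have hg_int : Integrable g volume := Integrable.mono' hD hg_meas hbound
  have hScm : ∀ ε : ℝ, MeasurableSet {y : EuclideanSpace ℝ (Fin N) | ε < dist x y} :=
    fun ε => (isOpen_lt continuous_const (continuous_const.dist continuous_id)).measurableSet
  constructor
  · intro ε _
    exact hg_int.integrableOn
  · refine ⟨∫ y, g y ∂volume, ?_⟩
    have htend := tendsto_integral_filter_of_dominated_convergence
      (μ := (volume : Measure (EuclideanSpace ℝ (Fin N))))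
      (l := nhdsWithin (0:ℝ) (Set.Ioi 0))
      (F := fun ε : ℝ => ({y : EuclideanSpace ℝ (Fin N) | ε < dist x y}).indicator g)
      (f := g) (bound := fun y => ‖g y‖)
      (Filter.Eventually.of_forall fun ε => hg_meas.indicator (hScm ε))
      (Filter.Eventually.of_forall fun ε => Filter.Eventually.of_forall fun y =>
        norm_indicator_le_norm_self g y)
      hg_int.norm
      (hae_ne.mono fun y hy => by
        have hr : 0 < dist x y := dist_pos.2 fun h => hy h.symm
        refine Filter.Tendsto.congr' ?_ tendsto_const_nhds
        filter_upwards [Ioo_mem_nhdsGT_of_mem (Set.left_mem_Ico.2 hr)] with ε hε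
        exact (Set.indicator_of_mem (show y ∈ {y | ε < dist x y} from hε.2) g).symm)
    refine htend.congr fun ε => ?_
    exact integral_indicator (hScm ε)
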